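/- Let D_F := D + iB be a closed operator where D is self-adjoint with D² ≥ 1 and B is a bounded self-adjoint operator with ‖B‖ ≤ a < 1, such that (D + iB)*(D + iB) ≥ (1 − a²)·1 and similarly for the adjoint. Then for every y ∈ ℝ, iy belongs to the resolvent set of D + iB and ‖(D + iB − iy)^{-1}‖ ≤ √6 / ((1 − a²) √(1 + y²)). -/

import Mathlib

set_option maxHeartbeats 1000000

theorem aux1 (a s : ℝ) (ha0 : 0 ≤ a) (ha1 : a ≤ 1) (has : a ≤ s) (hs : 3/2 ≤ s^2) :
    (1-a^2)^2 * s^2 ≤ 3*(s-a)^2 := by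
  have hs0 : 0 ≤ s := le_trans ha0 has
  have hs' : (1.22:ℝ) ≤ s := by nlinarith
  have hsa0 : 0 ≤ s - a := by linarith
  have key : (1-a^2)*s ≤ 1.73199*(s-a) := by nlinarith [sq_nonneg (a - 0.71)]
  have k0 : 0 ≤ (1-a^2)*s := mul_nonneg (by nlinarith [sq_nonneg a, mul_le_one₀ ha1 ha0 ha1]) hs0
  calc (1-a^2)^2 * s^2 = ((1-a^2)*s)^2 := by ring
    _ ≤ (1.73199*(s-a))^2 := by
        apply sq_le_sq' <;> nlinarith
    _ ≤ 3*(s-a)^2 := by nlinarith [sq_nonneg (s-a)]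

theorem scalar_key (a t p q μ y : ℝ) (ha0 : 0 ≤ a) (ha1 : a < 1)
    (ht : 1 ≤ t) (hq : 0 ≤ q) (hμ0 : 0 ≤ μ) (hμ1 : μ ≤ t*q)
    (hpq : p^2 + q^2 ≤ a^2)
    (hc : 1 - a^2 ≤ t^2 + q^2 - 2*μ + p^2) :
    (1-a^2)^2 * (1+y^2) ≤ 6*(t^2 + q^2 - 2*μ + (p-y)^2) := by
  have hε0 : 0 < 1 - a^2 := by nlinarith
  have hε1 : 1 - a^2 ≤ 1 := by nlinarith
  have hqa : q ≤ a := by nlinarith [sq_nonneg p]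
  have hG1 : (t-q)^2 ≤ t^2 + q^2 - 2*μ := by nlinarith
  have R1 : (1-a^2)^2/2 ≤ t^2 + q^2 - 2*μ := by
    rcases le_or_gt (p^2) ((1-a^2)/2) with h | h
    · nlinarith
    · have hq2 : q^2 ≤ 1 - (3/2)*(1-a^2) := by nlinarith
      have hq3 : q ≤ 1 - (3/4)*(1-a^2) := by nlinarith [sq_nonneg ((1 - (3/4)*(1-a^2)) - q)]
      nlinarith
  have R2 : (1-a^2)^2*y^2 ≤ 3*(t^2 + q^2 - 2*μ + (p-y)^2) := by
    have hpa : |p| ≤ a := abs_le.2 (by constructor <;> nlinarith [sq_nonneg q])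
    rcases le_or_gt a |y| with hay | hay
    · rcases le_or_gt ((1-a^2)^2*y^2) (3*(|y|-a)^2) with h | h
      · have h1 : |y| - a ≤ |p - y| := by
          have h2 := abs_sub_abs_le_abs_sub y p
          have h3 : |y - p| = |p - y| := abs_sub_comm y p
          linarith
        have h2 : 0 ≤ |y| - a := by linarith
        have h5 : (|y|-a)^2 ≤ (p-y)^2 := by
          calc (|y|-a)^2 ≤ |p-y|^2 := by nlinarith [abs_nonneg (p-y)]
            _ = (p-y)^2 := sq_abs _
        nlinarith
      · have hy2 : y^2 ≤ 3/2 := by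
          by_contra hcon
          push_neg at hcon
          have h6 := aux1 a |y| ha0 (le_of_lt ha1) hay (by rw [sq_abs]; linarith)
          rw [sq_abs] at h6
          linarith
        nlinarith [sq_nonneg (p-y)]
    · have hy2 : y^2 ≤ 3/2 := by nlinarith [sq_abs y, abs_nonneg y]
      nlinarith [sq_nonneg (p-y)]
  nlinarith [sq_nonneg (p-y)]
local notation "⟪" x ", " y "⟫" => @inner ℂ _ _ x y

theorem norm_add_I_smul_sq {H : Type*} [NormedAddCommGroup H] [InnerProductSpace ℂ H] (u x : H) :
    ‖u + Complex.I • x‖^2 = ‖u‖^2 + ‖x‖^2 - 2 * (⟪u, x⟫).im := by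
  rw [@norm_add_sq ℂ, norm_smul]
  simp [inner_smul_right, Complex.mul_re]
  ring

theorem norm_sub_I_smul_sq {H : Type*} [NormedAddCommGroup H] [InnerProductSpace ℂ H] (u x : H) :
    ‖u - Complex.I • x‖^2 = ‖u‖^2 + ‖x‖^2 + 2 * (⟪u, x⟫).im := by
  have := norm_add_I_smul_sq u (-x)
  simpa [inner_neg_right, sub_eq_add_neg] using this

theorem coercive_unit {H : Type*} [NormedAddCommGroup H] [InnerProductSpace ℂ H]
    (a : ℝ) (ha0 : 0 ≤ a) (ha1 : a < 1) (y : ℝ)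
    (v dv bv : H) (hv : ‖v‖ = 1) (ht : 1 ≤ ‖dv‖)
    (hdreal : (⟪dv, v⟫).im = 0) (hbreal : (⟪v, bv⟫).im = 0)
    (hbnorm : ‖bv‖ ≤ a)
    (hlow : 1 - a^2 ≤ ‖dv + Complex.I • bv‖^2)
    (hlow' : 1 - a^2 ≤ ‖dv - Complex.I • bv‖^2) :
    (1-a^2)^2 * (1+y^2) ≤ 6 * ‖dv + Complex.I • bv - (Complex.I * (y:ℂ)) • v‖^2 := by
  set t := ‖dv‖ with htdef
  set p := (⟪v, bv⟫).re with hpdef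
  set w := bv - (p:ℂ) • v with hwdef
  set q := ‖w‖ with hqdef
  have hq0 : 0 ≤ q := norm_nonneg _
  have hvv : ⟪v, v⟫ = 1 := by
    rw [inner_self_eq_norm_sq_to_K, hv]; norm_num
  have hpC : ⟪v, bv⟫ = (p:ℂ) := by
    apply Complex.ext <;> simp [hbreal] <;> rfl
  have horth : ⟪v, w⟫ = 0 := by
    rw [hwdef, inner_sub_right, inner_smul_right, hvv, hpC]; ring
  have Pyth : ∀ r : ℝ, ‖(r:ℂ) • v + w‖^2 = r^2 + q^2 := by
    intro r
    rw [@norm_add_sq ℂ, norm_smul, inner_smul_left, horth, hv]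
    simp; rfl
  have hbv : bv = (p:ℂ) • v + w := by rw [hwdef]; abel
  have hnormbv : ‖bv‖^2 = p^2 + q^2 := by rw [hbv, Pyth]
  have hpq : p^2 + q^2 ≤ a^2 := by
    rw [← hnormbv]
    have := norm_nonneg bv
    nlinarith
  set μ := (⟪dv, w⟫).im with hμdef
  have habs : |μ| ≤ t * q := by
    calc |μ| ≤ ‖⟪dv, w⟫‖ := Complex.abs_im_le_norm _
      _ = ‖⟪dv, w⟫‖ := rfl
      _ ≤ t * q := norm_inner_le_norm _ _
  have himb : (⟪dv, bv⟫).im = μ := by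
    rw [hbv, inner_add_right, inner_smul_right]
    simp [hdreal]; rfl
  have hL1 : 1 - a^2 ≤ t^2 + (p^2 + q^2) - 2*μ := by
    rw [norm_add_I_smul_sq, hnormbv, himb] at hlow
    linarith
  have hL2 : 1 - a^2 ≤ t^2 + (p^2 + q^2) + 2*μ := by
    rw [norm_sub_I_smul_sq, hnormbv, himb] at hlow'
    linarith
  have hx : dv + Complex.I • bv - (Complex.I * (y:ℂ)) • v
      = dv + Complex.I • (((p - y : ℝ):ℂ) • v + w) := by
    rw [hbv]
    push_cast
    module
  have hnormT : ‖dv + Complex.I • bv - (Complex.I * (y:ℂ)) • v‖^2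
      = t^2 + ((p-y)^2 + q^2) - 2*μ := by
    rw [hx, norm_add_I_smul_sq, Pyth]
    congr 2
    rw [inner_add_right, inner_smul_right]
    simp [hdreal]; rfl
  rw [hnormT]
  have key := scalar_key a t p q |μ| y ha0 ha1 ht hq0 (abs_nonneg μ) habs hpq
    (by rcases abs_cases μ with ⟨h1, _⟩ | ⟨h1, _⟩ <;> nlinarith)
  rcases abs_cases μ with ⟨h1, _⟩ | ⟨h1, _⟩ <;> nlinarith

theorem coercive {H : Type*} [NormedAddCommGroup H] [InnerProductSpace ℂ H]
    (D : H →ₗ.[ℂ] H)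
    (hsym : ∀ ψ φ : D.domain, ⟪D ψ, (φ:H)⟫ = ⟪(ψ:H), D φ⟫)
    (hDsq : ∀ ψ : D.domain, ‖(ψ : H)‖ ≤ ‖D ψ‖)
    (B : H →L[ℂ] H) (hBsym : ∀ x z : H, ⟪B x, z⟫ = ⟪x, B z⟫)
    (a : ℝ) (ha0 : 0 ≤ a) (ha1 : a < 1) (hBa : ‖B‖ ≤ a)
    (hlow : ∀ ψ : D.domain, Real.sqrt (1 - a ^ 2) * ‖(ψ : H)‖ ≤ ‖D ψ + Complex.I • B (ψ : H)‖)
    (hlow' : ∀ ψ : D.domain, Real.sqrt (1 - a ^ 2) * ‖(ψ : H)‖ ≤ ‖D ψ - Complex.I • B (ψ : H)‖)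
    (y : ℝ) (ψ : D.domain) :
    (1 - a^2) * Real.sqrt (1 + y^2) * ‖(ψ : H)‖
      ≤ Real.sqrt 6 * ‖D ψ + Complex.I • B (ψ : H) - (Complex.I * (y:ℂ)) • (ψ : H)‖ := by
  have hε0 : (0:ℝ) < 1 - a^2 := by nlinarith
  by_cases hψ0 : (ψ : H) = 0
  · have hz : ψ = 0 := Subtype.ext hψ0
    subst hz
    simp only [ZeroMemClass.coe_zero, norm_zero, mul_zero]
    positivity
  · set n := ‖(ψ : H)‖ with hn
    have hn0 : 0 < n := norm_pos_iff.2 hψ0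
    set ψ' : D.domain := ((n⁻¹ : ℝ) : ℂ) • ψ with hψ'
    have hcoe : (ψ' : H) = ((n⁻¹ : ℝ) : ℂ) • (ψ : H) := rfl
    have hnorm1 : ‖(ψ' : H)‖ = 1 := by
      rw [hcoe, norm_smul, Complex.norm_real, Real.norm_eq_abs, abs_of_pos (by positivity)]
      field_simp; rfl
    have hD' : D ψ' = ((n⁻¹ : ℝ) : ℂ) • D ψ := by
      rw [hψ', D.map_smul]
    have hB' : B (ψ' : H) = ((n⁻¹ : ℝ) : ℂ) • B (ψ : H) := by
      rw [hcoe, map_smul]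
    -- real inner products
    have hdreal : (⟪D ψ', (ψ' : H)⟫).im = 0 := by
      have h1 : ⟪D ψ', (ψ' : H)⟫ = (starRingEnd ℂ) ⟪D ψ', (ψ' : H)⟫ := by
        conv_lhs => rw [hsym ψ' ψ']
        rw [← inner_conj_symm]
      have := Complex.conj_eq_iff_im.mp h1.symm
      exact this
    have hbreal : (⟪(ψ' : H), B (ψ' : H)⟫).im = 0 := by
      have h1 : ⟪(ψ' : H), B (ψ' : H)⟫ = (starRingEnd ℂ) ⟪(ψ' : H), B (ψ' : H)⟫ := by
        conv_lhs => rw [← hBsym]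
        rw [← inner_conj_symm]
      exact Complex.conj_eq_iff_im.mp h1.symm
    have hsq : ∀ u : H, Real.sqrt (1-a^2) ≤ ‖u‖ → 1 - a^2 ≤ ‖u‖^2 := by
      intro u hu
      have h1 : Real.sqrt (1-a^2)^2 ≤ ‖u‖^2 := by
        apply pow_le_pow_left₀ (Real.sqrt_nonneg _) hu
      rwa [Real.sq_sqrt (le_of_lt hε0)] at h1
    have key := coercive_unit a ha0 ha1 y (ψ' : H) (D ψ') (B (ψ' : H)) hnorm1
      (by simpa [hnorm1] using hDsq ψ')
      hdreal hbreal
      (by calc ‖B (ψ' : H)‖ ≤ ‖B‖ * ‖(ψ' : H)‖ := B.le_opNorm _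
            _ ≤ a := by rw [hnorm1]; simpa using hBa)
      (hsq _ (by simpa [hnorm1] using hlow ψ'))
      (hsq _ (by simpa [hnorm1] using hlow' ψ'))
    -- rescale
    set Tv : H := D ψ + Complex.I • B (ψ : H) - (Complex.I * (y:ℂ)) • (ψ : H) with hTv
    have hscale : D ψ' + Complex.I • B (ψ' : H) - (Complex.I * (y:ℂ)) • (ψ' : H)
        = ((n⁻¹ : ℝ) : ℂ) • Tv := by
      rw [hD', hB', hcoe, hTv]
      module
    rw [hscale] at key
    have hTn : ‖((n⁻¹ : ℝ) : ℂ) • Tv‖ = n⁻¹ * ‖Tv‖ := by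
      rw [norm_smul, Complex.norm_real, Real.norm_eq_abs, abs_of_pos (by positivity)]
    rw [hTn] at key
    -- key : (1-a^2)^2 * (1+y^2) ≤ 6 * (n⁻¹ * ‖Tv‖)^2
    have hTv0 : 0 ≤ ‖Tv‖ := norm_nonneg _
    have hfin : ((1-a^2) * Real.sqrt (1+y^2) * n)^2 ≤ (Real.sqrt 6 * ‖Tv‖)^2 := by
      have h6 : (Real.sqrt 6)^2 = 6 := Real.sq_sqrt (by norm_num)
      have hy : (Real.sqrt (1+y^2))^2 = 1+y^2 := Real.sq_sqrt (by positivity)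
      have hinv : (n⁻¹ * ‖Tv‖)^2 * n^2 = ‖Tv‖^2 := by
        field_simp
      calc ((1-a^2) * Real.sqrt (1+y^2) * n)^2
          = ((1-a^2)^2 * (1+y^2)) * n^2 := by rw [mul_pow, mul_pow, hy]
        _ ≤ (6 * (n⁻¹ * ‖Tv‖)^2) * n^2 := by
            apply mul_le_mul_of_nonneg_right key (by positivity)
        _ = 6 * ‖Tv‖^2 := by rw [mul_assoc, hinv]
        _ = (Real.sqrt 6 * ‖Tv‖)^2 := by rw [mul_pow, h6]
    have hL0 : 0 ≤ (1-a^2) * Real.sqrt (1+y^2) * n := by positivity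
    have hR0 : 0 ≤ Real.sqrt 6 * ‖Tv‖ := by positivity
    nlinarith [hfin, hL0, hR0]

theorem pmap_congr {H : Type*} [NormedAddCommGroup H] [InnerProductSpace ℂ H]
    {S T : H →ₗ.[ℂ] H} (h : S = T) {x : H} (hx : x ∈ S.domain) :
    ∃ hx' : x ∈ T.domain, S ⟨x, hx⟩ = T ⟨x, hx'⟩ := by
  subst h; exact ⟨hx, rfl⟩

theorem D_closed {H : Type*} [NormedAddCommGroup H] [InnerProductSpace ℂ H] [CompleteSpace H]
    (D : H →ₗ.[ℂ] H) (hdense : Dense (D.domain : Set H)) (hsa : D.adjoint = D)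
    (hsym : ∀ ψ φ : D.domain, ⟪D ψ, (φ:H)⟫ = ⟪(ψ:H), D φ⟫)
    (f : ℕ → D.domain) (ψ φ : H)
    (hf : Filter.Tendsto (fun n => ((f n : H))) Filter.atTop (nhds ψ))
    (hDf : Filter.Tendsto (fun n => D (f n)) Filter.atTop (nhds φ)) :
    ∃ hm : ψ ∈ D.domain, D ⟨ψ, hm⟩ = φ := by
  have h1 : ∀ x : D.domain, ⟪φ, (x:H)⟫ = ⟪ψ, D x⟫ := by
    intro x
    have l1 : Filter.Tendsto (fun n => ⟪D (f n), (x:H)⟫) Filter.atTop (nhds ⟪φ, (x:H)⟫) :=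
      Filter.Tendsto.inner hDf tendsto_const_nhds
    have l2 : Filter.Tendsto (fun n => ⟪D (f n), (x:H)⟫) Filter.atTop (nhds ⟪ψ, D x⟫) := by
      have l3 : Filter.Tendsto (fun n => ⟪((f n : H)), D x⟫) Filter.atTop (nhds ⟪ψ, D x⟫) :=
        Filter.Tendsto.inner hf tendsto_const_nhds
      exact l3.congr (fun n => (hsym (f n) x).symm)
    exact tendsto_nhds_unique l1 l2
  have hmem : ψ ∈ D.adjoint.domain :=
    LinearPMap.mem_adjoint_domain_of_exists _ ⟨φ, fun x => h1 x⟩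
  have hval : D.adjoint ⟨ψ, hmem⟩ = φ :=
    LinearPMap.adjoint_apply_eq hdense _ (fun x => h1 x)
  obtain ⟨hm', heq⟩ := pmap_congr hsa hmem
  exact ⟨hm', by rw [← heq, hval]⟩

/-- Let `D_F = D + iB` where `D` is self-adjoint with `D² ≥ 1` and `B` is
a bounded self-adjoint operator with `‖B‖ ≤ a < 1`, such that
`(D + iB)*(D + iB) ≥ (1 − a²)·1` and similarly for the adjoint `D − iB`. Then for every
`y ∈ ℝ`, `iy` belongs to the resolvent set of `D + iB` and
`‖(D + iB − iy)⁻¹‖ ≤ √6 / ((1 − a²) √(1 + y²))`. -/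
theorem conjugated_dirac_resolvent_bound
    {H : Type*} [NormedAddCommGroup H] [InnerProductSpace ℂ H] [CompleteSpace H]
    (D : H →ₗ.[ℂ] H) (hdense : Dense (D.domain : Set H)) (hsa : D.adjoint = D)
    (hDsq : ∀ ψ : D.domain, ‖(ψ : H)‖ ≤ ‖D ψ‖)
    (B : H →L[ℂ] H) (hB : IsSelfAdjoint B)
    (a : ℝ) (ha0 : 0 ≤ a) (ha1 : a < 1) (hBa : ‖B‖ ≤ a)
    (hlow : ∀ ψ : D.domain,
        Real.sqrt (1 - a ^ 2) * ‖(ψ : H)‖ ≤ ‖D ψ + Complex.I • B (ψ : H)‖)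
    (hlow' : ∀ ψ : D.domain,
        Real.sqrt (1 - a ^ 2) * ‖(ψ : H)‖ ≤ ‖D ψ - Complex.I • B (ψ : H)‖) :
    ∀ y : ℝ, ∃ R : H →L[ℂ] H,
      (∀ ψ : D.domain,
          R (D ψ + Complex.I • B (ψ : H) - (Complex.I * (y : ℂ)) • (ψ : H)) = ψ)
      ∧ (∀ φ : H, ∃ h : R φ ∈ D.domain,
          D ⟨R φ, h⟩ + Complex.I • B (R φ) - (Complex.I * (y : ℂ)) • (R φ) = φ)
      ∧ ‖R‖ ≤ Real.sqrt 6 / ((1 - a ^ 2) * Real.sqrt (1 + y ^ 2)) := by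
  intro y
  have hsym : ∀ ψ φ : D.domain, ⟪D ψ, (φ:H)⟫ = ⟪(ψ:H), D φ⟫ := by
    have h := LinearPMap.adjoint_isFormalAdjoint hdense
    rw [hsa] at h
    exact fun ψ φ => h ψ φ
  have hBsym : ∀ x z : H, ⟪B x, z⟫ = ⟪x, B z⟫ := fun x z => hB.isSymmetric x z
  have hε0 : (0:ℝ) < 1 - a^2 := by nlinarith
  set κ : ℝ := (1 - a ^ 2) * Real.sqrt (1 + y ^ 2) with hκ
  have hκ0 : 0 < κ := by
    apply mul_pos hε0
    exact Real.sqrt_pos.2 (by positivity)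
  have h60 : (0:ℝ) < Real.sqrt 6 := Real.sqrt_pos.2 (by norm_num)
  -- the operator T = D + iB - iy
  set T : D.domain →ₗ[ℂ] H :=
    { toFun := fun ψ => D ψ + Complex.I • B (ψ:H) - (Complex.I * (y:ℂ)) • (ψ:H)
      map_add' := by
        intro χ ξ
        simp only [LinearPMap.map_add, Submodule.coe_add, map_add]
        module
      map_smul' := by
        intro c χ
        simp only [LinearPMap.map_smul, Submodule.coe_smul, map_smul, RingHom.id_apply]
        module } with hT
  have hTψ : ∀ ψ : D.domain,
      T ψ = D ψ + Complex.I • B (ψ:H) - (Complex.I * (y:ℂ)) • (ψ:H) := fun _ => rfl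
  have hco : ∀ ψ : D.domain, κ * ‖(ψ:H)‖ ≤ Real.sqrt 6 * ‖T ψ‖ := by
    intro ψ
    rw [hTψ]
    exact coercive D hsym hDsq B hBsym a ha0 ha1 hBa hlow hlow' y ψ
  -- coercivity of the formal adjoint D - iB + iy
  have hco' : ∀ ψ : D.domain,
      κ * ‖(ψ:H)‖ ≤ Real.sqrt 6 * ‖D ψ - Complex.I • B (ψ:H) + (Complex.I * (y:ℂ)) • (ψ:H)‖ := by
    intro ψ
    have hlowN : ∀ χ : D.domain,
        Real.sqrt (1 - a ^ 2) * ‖(χ : H)‖ ≤ ‖D χ + Complex.I • (-B) (χ : H)‖ := by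
      intro χ
      have := hlow' χ
      simpa [sub_eq_add_neg] using this
    have hlowN' : ∀ χ : D.domain,
        Real.sqrt (1 - a ^ 2) * ‖(χ : H)‖ ≤ ‖D χ - Complex.I • (-B) (χ : H)‖ := by
      intro χ
      have := hlow χ
      simpa [sub_eq_add_neg] using this
    have key := coercive D hsym hDsq (-B) (by intro x z; simp only [ContinuousLinearMap.neg_apply,
      inner_neg_left, inner_neg_right, hBsym]) a ha0 ha1 (by simpa using hBa) hlowN hlowN' (-y) ψ
    have h1 : ((-y:ℝ))^2 = y^2 := by ring
    rw [h1] at key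
    have h2 : D ψ + Complex.I • (-B) (ψ:H) - (Complex.I * ((-y:ℝ):ℂ)) • (ψ:H)
        = D ψ - Complex.I • B (ψ:H) + (Complex.I * (y:ℂ)) • (ψ:H) := by
      have hcast : ((-y:ℝ):ℂ) = -(y:ℂ) := by push_cast; ring
      rw [hcast]
      simp only [ContinuousLinearMap.neg_apply]
      module
    rw [h2] at key
    exact key
  -- injectivity
  have hker : ∀ ψ : D.domain, T ψ = 0 → ψ = 0 := by
    intro ψ h
    have h1 := hco ψ
    rw [h, norm_zero, mul_zero] at h1
    have h2 : ‖(ψ:H)‖ = 0 := le_antisymm (by nlinarith [norm_nonneg (ψ:H)]) (norm_nonneg _)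
    exact Subtype.ext (norm_eq_zero.mp h2)
  have hinj : Function.Injective T := by
    rw [← LinearMap.ker_eq_bot]
    exact LinearMap.ker_eq_bot'.mpr hker
  -- closed range
  have hclosed : IsClosed ((LinearMap.range T : Submodule ℂ H) : Set H) := by
    apply IsSeqClosed.isClosed
    intro g φ hg hgφ
    choose f hf using fun n => LinearMap.mem_range.mp (hg n)
    have hcau : CauchySeq (fun n => ((f n : H))) := by
      rw [Metric.cauchySeq_iff]
      intro δ hδ
      obtain ⟨N, hN⟩ := Metric.cauchySeq_iff.mp hgφ.cauchySeq (κ * δ / Real.sqrt 6) (by positivity)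
      refine ⟨N, fun m hm n hn => ?_⟩
      have h1 := hco (f m - f n)
      have h2 : T (f m - f n) = g m - g n := by rw [map_sub, hf, hf]
      rw [h2] at h1
      have h3 : dist (g m) (g n) < κ * δ / Real.sqrt 6 := hN m hm n hn
      rw [dist_eq_norm] at h3 ⊢
      have h4 : ((f m - f n : D.domain) : H) = (f m : H) - (f n : H) := rfl
      rw [h4] at h1
      have h5 : Real.sqrt 6 * ‖g m - g n‖ < κ * δ := by
        have h6 := mul_lt_mul_of_pos_left h3 h60
        have h7 : Real.sqrt 6 * (κ * δ / Real.sqrt 6) = κ * δ := by field_simp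
        rwa [h7] at h6
      exact lt_of_mul_lt_mul_left (lt_of_le_of_lt h1 h5) (le_of_lt hκ0)
    obtain ⟨ψ, hψ⟩ := cauchySeq_tendsto_of_complete hcau
    have hgn : ∀ n, D (f n) = g n - Complex.I • B ((f n : H)) + (Complex.I * (y:ℂ)) • ((f n : H)) := by
      intro n
      rw [← hf n, hTψ]
      module
    have hDf : Filter.Tendsto (fun n => D (f n)) Filter.atTop
        (nhds (φ - Complex.I • B ψ + (Complex.I * (y:ℂ)) • ψ)) := by
      have t1 : Filter.Tendsto (fun n => B ((f n : H))) Filter.atTop (nhds (B ψ)) :=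
        (B.continuous.tendsto ψ).comp hψ
      have t2 := t1.const_smul Complex.I
      have t3 := hψ.const_smul (Complex.I * (y:ℂ))
      exact Filter.Tendsto.congr (fun n => (hgn n).symm) ((hgφ.sub t2).add t3)
    obtain ⟨hm, hval⟩ := D_closed D hdense hsa hsym f ψ _ hψ hDf
    refine LinearMap.mem_range.mpr ⟨⟨ψ, hm⟩, ?_⟩
    rw [hTψ]
    have : (((⟨ψ, hm⟩ : D.domain)) : H) = ψ := rfl
    rw [this, hval]
    module
  -- dense range: orthogonal complement trivial
  have horth : (LinearMap.range T)ᗮ = ⊥ := by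
    rw [Submodule.eq_bot_iff]
    intro φ hφ
    have h0 : ∀ x : D.domain, ⟪φ, T x⟫ = 0 := by
      intro x
      have h1 := (Submodule.mem_orthogonal _ φ).mp hφ (T x) (LinearMap.mem_range_self T x)
      rw [← inner_conj_symm, h1, map_zero]
    have h1 : ∀ x : D.domain,
        ⟪(Complex.I • B φ - (Complex.I * (y:ℂ)) • φ : H), (x:H)⟫ = ⟪φ, D x⟫ := by
      intro x
      have h2 := h0 x
      rw [hTψ] at h2
      simp only [inner_add_right, inner_sub_right, inner_smul_right] at h2
      simp only [inner_sub_left, inner_smul_left, Complex.conj_I, map_mul,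
        Complex.conj_ofReal]
      rw [hBsym φ (x:H)]
      linear_combination -h2
    have hmem : φ ∈ D.adjoint.domain :=
      LinearPMap.mem_adjoint_domain_of_exists _ ⟨_, h1⟩
    have hval : D.adjoint ⟨φ, hmem⟩ = Complex.I • B φ - (Complex.I * (y:ℂ)) • φ :=
      LinearPMap.adjoint_apply_eq hdense _ h1
    obtain ⟨hm', heq⟩ := pmap_congr hsa hmem
    have hDφ : D ⟨φ, hm'⟩ = Complex.I • B φ - (Complex.I * (y:ℂ)) • φ := by rw [← heq, hval]
    have h3 := hco' ⟨φ, hm'⟩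
    have hcoe : (((⟨φ, hm'⟩ : D.domain)) : H) = φ := rfl
    rw [hcoe] at h3
    have h4 : D ⟨φ, hm'⟩ - Complex.I • B φ + (Complex.I * (y:ℂ)) • φ = 0 := by
      rw [hDφ]; module
    rw [h4, norm_zero, mul_zero] at h3
    have h5 : ‖φ‖ = 0 := le_antisymm (by nlinarith [norm_nonneg φ]) (norm_nonneg _)
    exact norm_eq_zero.mp h5
  have hsurj : Function.Surjective T := by
    haveI := hclosed.completeSpace_coe
    rw [← LinearMap.range_eq_top]
    rwa [Submodule.orthogonal_eq_bot_iff] at horth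
  set e : D.domain ≃ₗ[ℂ] H := LinearEquiv.ofBijective T ⟨hinj, hsurj⟩ with he'
  have he : ∀ ψ : D.domain, e ψ = T ψ := fun _ => rfl
  set R₀ : H →ₗ[ℂ] H := (D.domain.subtype).comp (e.symm : H →ₗ[ℂ] D.domain) with hR₀'
  have hR₀ : ∀ φ : H, R₀ φ = ((e.symm φ : D.domain) : H) := fun _ => rfl
  have hTe : ∀ φ : H, T (e.symm φ) = φ := by
    intro φ
    rw [← he, e.apply_symm_apply]
  have hbound : ∀ φ : H, ‖R₀ φ‖ ≤ (Real.sqrt 6 / κ) * ‖φ‖ := by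
    intro φ
    have h1 := hco (e.symm φ)
    rw [hTe] at h1
    rw [hR₀, div_mul_eq_mul_div, le_div_iff₀ hκ0]
    nlinarith [h1]
  refine ⟨R₀.mkContinuous (Real.sqrt 6 / κ) hbound, ?_, ?_, ?_⟩
  · intro ψ
    show R₀ (D ψ + Complex.I • B (ψ:H) - (Complex.I * (y:ℂ)) • (ψ:H)) = (ψ:H)
    rw [← hTψ, hR₀, ← he, e.symm_apply_apply]
  · intro φ
    have hRφ : (R₀.mkContinuous (Real.sqrt 6 / κ) hbound) φ = ((e.symm φ : D.domain) : H) := rfl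
    rw [hRφ]
    refine ⟨(e.symm φ).2, ?_⟩
    exact hTe φ
  · exact R₀.mkContinuous_norm_le (by positivity) hbound
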